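/- Let items of M be sorted in nonincreasing order of value for agent i, and let n ≥ 2 with m ≥ 2n+1. Then removing the three items ranked 2n−1, 2n, and 2n+1 satisfies μ_i^{n-1}(M \ {2n−1, 2n, 2n+1}) ≥ μ_i^n(M). -/

import Mathlib

open Finset

/-- `P` is a partition of the finite set `M` of items into `n` (possibly empty) bundles. -/
def IsPartition {ι : Type*} [DecidableEq ι] (n : ℕ) (M : Finset ι) (P : Fin n → Finset ι) : Prop :=
  (∀ k l, k ≠ l → Disjoint (P k) (P l)) ∧ Finset.univ.biUnion P = M

/-- The maximin share of an agent with additive valuation `v` when `M` is split into `n`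
bundles: the supremum over partitions of `M` into `n` bundles of the minimum bundle value. -/
noncomputable def mms {ι : Type*} [DecidableEq ι] (v : ι → ℝ) (n : ℕ) (M : Finset ι) : ℝ :=
  sSup {x | ∃ P : Fin n → Finset ι, IsPartition n M P ∧ x = ⨅ k : Fin n, ∑ j ∈ P k, v j}

lemma exists_injOn_of_card_le' {s t : Finset ℕ} (h : s.card ≤ t.card) :
    ∃ f : ℕ → ℕ, Set.InjOn f ↑s ∧ ∀ x ∈ s, f x ∈ t := by
  classical
  obtain ⟨u, hut, huc⟩ := Finset.exists_subset_card_eq h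
  have hcard : Fintype.card s = Fintype.card u := by
    simp [Fintype.card_coe, huc]
  let e := Fintype.equivOfCardEq hcard
  refine ⟨fun x => if hx : x ∈ s then (e ⟨x, hx⟩ : ℕ) else 0, ?_, ?_⟩
  · intro x hx y hy hxy
    simp only [Finset.mem_coe] at hx hy
    simp only [dif_pos hx, dif_pos hy] at hxy
    have := e.injective (Subtype.coe_injective hxy)
    exact congrArg Subtype.val this
  · intro x hx
    simp only [dif_pos hx]
    exact hut (e ⟨x, hx⟩).2

/-- For an ordered instance, removing the three items ranked 2n−1, 2n, 2n+1
satisfies μ_i^{n-1}(M \ {2n−1, 2n, 2n+1}) ≥ μ_i^n(M). -/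
theorem mms_remove_S3 (n m : ℕ) (hn : 2 ≤ n) (hm : 2 * n + 1 ≤ m) (v : ℕ → ℝ)
    (hnn : ∀ j ∈ Finset.Icc 1 m, 0 ≤ v j)
    (hsorted : ∀ j k, 1 ≤ j → j ≤ k → k ≤ m → v k ≤ v j) :
    mms v n (Finset.Icc 1 m) ≤
      mms v (n - 1) (Finset.Icc 1 m \ {2 * n - 1, 2 * n, 2 * n + 1}) := by
  classical
  set M : Finset ℕ := Finset.Icc 1 m with hMdef
  set T : Finset ℕ := {2 * n - 1, 2 * n, 2 * n + 1} with hTdef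
  set M' : Finset ℕ := M \ T with hM'def
  haveI hneFin : Nonempty (Fin (n - 1)) := ⟨⟨0, by omega⟩⟩
  set j0 : Fin (n - 1) := ⟨0, by omega⟩ with hj0def
  have hT_mem : ∀ t ∈ T, 2 * n - 1 ≤ t ∧ t ≤ 2 * n + 1 := by
    intro t ht
    simp only [hTdef, mem_insert, mem_singleton] at ht
    omega
  have hM'nn : ∀ j ∈ M', 0 ≤ v j := fun j hj => hnn j (mem_sdiff.mp hj).1
  -- boundedness of the target set
  have hbdd : BddAbove {x | ∃ P : Fin (n - 1) → Finset ℕ,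
      IsPartition (n - 1) M' P ∧ x = ⨅ k : Fin (n - 1), ∑ j ∈ P k, v j} := by
    refine ⟨∑ j ∈ M', v j, ?_⟩
    rintro x ⟨Q, ⟨hQd, hQu⟩, rfl⟩
    refine le_trans (ciInf_le (Set.Finite.bddBelow (Set.finite_range _)) j0) ?_
    apply Finset.sum_le_sum_of_subset_of_nonneg
    · rw [← hQu]; exact Finset.subset_biUnion_of_mem Q (mem_univ j0)
    · intro i hi _; exact hM'nn i hi
  apply Real.sSup_le
  · rintro x ⟨P, ⟨hPd, hPu⟩, rfl⟩
    have hPM : ∀ k, P k ⊆ M := fun k => by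
      rw [← hPu]; exact Finset.subset_biUnion_of_mem P (mem_univ k)
    -- pigeonhole: some bundle has ≥ 3 items among the top 2n+1
    set Top : Finset ℕ := Finset.Icc 1 (2 * n + 1) with hTopdef
    have hTopM : Top ⊆ M := Finset.Icc_subset_Icc_right hm
    have hTopcard : Top.card = 2 * n + 1 := by
      rw [hTopdef, Nat.card_Icc]; omega
    have hcover : Top ⊆ univ.biUnion (fun k => P k ∩ Top) := by
      intro y hy
      have hyM : y ∈ M := hTopM hy
      rw [← hPu] at hyM
      obtain ⟨k, -, hk⟩ := mem_biUnion.mp hyM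
      exact mem_biUnion.mpr ⟨k, mem_univ k, mem_inter.mpr ⟨hk, hy⟩⟩
    have hsum : 2 * n + 1 ≤ ∑ k : Fin n, (P k ∩ Top).card := by
      calc 2 * n + 1 = Top.card := hTopcard.symm
        _ ≤ (univ.biUnion fun k => P k ∩ Top).card := card_le_card hcover
        _ ≤ ∑ k : Fin n, (P k ∩ Top).card := card_biUnion_le
    obtain ⟨k0, hk0⟩ : ∃ k0 : Fin n, 3 ≤ (P k0 ∩ Top).card := by
      by_contra hcon
      push_neg at hcon
      have h2 : ∑ k : Fin n, (P k ∩ Top).card ≤ ∑ _k : Fin n, 2 :=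
        Finset.sum_le_sum (fun k _ => by have := hcon k; omega)
      rw [Finset.sum_const, card_univ, Fintype.card_fin, smul_eq_mul] at h2
      have := hsum.trans h2
      omega
    set A : Finset ℕ := (P k0 ∩ Top) \ T with hAdef
    set T' : Finset ℕ := T \ P k0 with hT'def
    have hTcard : T.card = 3 := by
      rw [hTdef]
      rw [card_insert_of_notMem (by simp only [mem_insert, mem_singleton]; omega),
        card_insert_of_notMem (by simp only [mem_singleton]; omega), card_singleton]
    have hcardA : T'.card ≤ A.card := by
      have h1 : ((P k0 ∩ Top) ∩ T).card ≤ (T ∩ P k0).card :=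
        card_le_card (by intro y hy; simp only [mem_inter] at hy ⊢; tauto)
      have h2 := Finset.card_sdiff_add_card_inter (P k0 ∩ Top) T
      have h3 := Finset.card_sdiff_add_card_inter T (P k0)
      rw [← hAdef] at h2
      rw [← hT'def, hTcard] at h3
      omega
    obtain ⟨f, hfinj, hfmaps⟩ := exists_injOn_of_card_le' hcardA
    have hAsub : A ⊆ M' := by
      intro y hy
      rw [hAdef, mem_sdiff, mem_inter] at hy
      exact mem_sdiff.mpr ⟨hPM k0 hy.1.1, hy.2⟩
    have hAP : A ⊆ P k0 := fun y hy => (mem_inter.mp (mem_sdiff.mp hy).1).1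
    have hAsmall : ∀ y ∈ A, 1 ≤ y ∧ y ≤ 2 * n - 2 := by
      intro y hy
      rw [hAdef, mem_sdiff, mem_inter, hTopdef, Finset.mem_Icc] at hy
      have := hy.2
      simp only [hTdef, mem_insert, mem_singleton] at this
      omega
    -- the reindexing avoiding k0
    have hn1 : (n - 1) + 1 = n := by omega
    set e : Fin (n - 1) → Fin n :=
      fun j => Fin.cast hn1 ((Fin.cast hn1.symm k0).succAbove j) with hedef
    have he_ne : ∀ j, e j ≠ k0 := by
      intro j h
      apply Fin.succAbove_ne (Fin.cast hn1.symm k0) j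
      apply Fin.val_injective
      simpa [hedef] using congrArg Fin.val h
    have he_inj : Function.Injective e := by
      intro a b h
      apply Fin.succAbove_right_injective (p := Fin.cast hn1.symm k0)
      apply Fin.val_injective
      simpa [hedef] using congrArg Fin.val h
    -- intersections of other bundles with T sit inside T'
    have hTP : ∀ j : Fin (n - 1), T ∩ P (e j) ⊆ T' := by
      intro j y hy
      rw [mem_inter] at hy
      rw [hT'def, mem_sdiff]
      exact ⟨hy.1, fun hc => (Finset.disjoint_left.mp (hPd _ _ (he_ne j)) hy.2) hc⟩
    set B : Fin (n - 1) → Finset ℕ :=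
      fun j => (P (e j) \ T) ∪ (T ∩ P (e j)).image f with hBdef
    have hBimA : ∀ j : Fin (n - 1), (T ∩ P (e j)).image f ⊆ A := by
      intro j y hy
      obtain ⟨t, ht, rfl⟩ := Finset.mem_image.mp hy
      exact hfmaps t (hTP j ht)
    have hBsub : ∀ j, B j ⊆ M' := by
      intro j y hy
      rw [hBdef] at hy
      rcases Finset.mem_union.mp hy with h | h
      · rw [mem_sdiff] at h
        exact mem_sdiff.mpr ⟨hPM _ h.1, h.2⟩
      · exact hAsub (hBimA j h)
    have hBdisj : ∀ j l, j ≠ l → Disjoint (B j) (B l) := by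
      intro j l hjl
      rw [Finset.disjoint_left]
      intro y hyj hyl
      have hejl : e j ≠ e l := fun h => hjl (he_inj h)
      rw [hBdef, Finset.mem_union] at hyj hyl
      rcases hyj with hj | hj <;> rcases hyl with hl | hl
      · exact Finset.disjoint_left.mp (hPd _ _ hejl) (mem_sdiff.mp hj).1 (mem_sdiff.mp hl).1
      · exact Finset.disjoint_left.mp (hPd _ _ (he_ne j)) (mem_sdiff.mp hj).1 (hAP (hBimA l hl))
      · exact Finset.disjoint_left.mp (hPd _ _ (he_ne l)) (mem_sdiff.mp hl).1 (hAP (hBimA j hj))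
      · obtain ⟨t, ht, hft⟩ := Finset.mem_image.mp hj
        obtain ⟨t', ht', hft'⟩ := Finset.mem_image.mp hl
        have : t = t' := hfinj (hTP j ht) (hTP l ht') (by rw [hft, hft'])
        subst this
        exact Finset.disjoint_left.mp (hPd _ _ hejl) (mem_inter.mp ht).2 (mem_inter.mp ht').2
    -- value of each B j dominates the original bundle
    have hBsum : ∀ j, ∑ i ∈ P (e j), v i ≤ ∑ i ∈ B j, v i := by
      intro j
      have hd : Disjoint (P (e j) \ T) ((T ∩ P (e j)).image f) := by
        rw [Finset.disjoint_left]
        intro y hy hy'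
        exact Finset.disjoint_left.mp (hPd _ _ (he_ne j)) (mem_sdiff.mp hy).1 (hAP (hBimA j hy'))
      rw [hBdef, Finset.sum_union hd,
        Finset.sum_image (fun a ha b hb hab => hfinj (hTP j ha) (hTP j hb) hab)]
      have h2 : ∑ t ∈ T ∩ P (e j), v t ≤ ∑ t ∈ T ∩ P (e j), v (f t) := by
        apply Finset.sum_le_sum
        intro t ht
        have htT : t ∈ T := (mem_inter.mp ht).1
        have hbounds := hT_mem t htT
        have hft := hAsmall (f t) (hfmaps t (hTP j ht))
        exact hsorted (f t) t hft.1 (by omega) (by omega)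
      have h3 : ∑ i ∈ P (e j) ∩ T, v i + ∑ i ∈ P (e j) \ T, v i = ∑ i ∈ P (e j), v i :=
        Finset.sum_inter_add_sum_sdiff _ _ _
      rw [Finset.inter_comm] at h3
      linarith
    -- the new partition
    set U : Finset ℕ := (univ.erase j0).biUnion B with hUdef
    set Q : Fin (n - 1) → Finset ℕ := fun j => if j = j0 then M' \ U else B j with hQdef
    have hBU : ∀ j, j ≠ j0 → B j ⊆ U := by
      intro j hj
      rw [hUdef]
      exact Finset.subset_biUnion_of_mem B (mem_erase.mpr ⟨hj, mem_univ j⟩)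
    have hQdisj : ∀ k l, k ≠ l → Disjoint (Q k) (Q l) := by
      intro k l hkl
      rw [hQdef]
      by_cases hk : k = j0 <;> by_cases hl : l = j0
      · exact absurd (hk.trans hl.symm) hkl
      · simp only [hk, if_pos rfl, if_neg hl]
        rw [Finset.disjoint_left]
        intro y hy hy'
        exact (mem_sdiff.mp hy).2 (hBU l hl hy')
      · simp only [hl, if_pos rfl, if_neg hk]
        rw [Finset.disjoint_right]
        intro y hy hy'
        exact (mem_sdiff.mp hy).2 (hBU k hk hy')
      · simp only [if_neg hk, if_neg hl]
        exact hBdisj k l hkl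
    have hQunion : univ.biUnion Q = M' := by
      apply Finset.Subset.antisymm
      · intro y hy
        obtain ⟨j, -, hj⟩ := mem_biUnion.mp hy
        simp only [hQdef] at hj
        by_cases h : j = j0
        · rw [if_pos h] at hj
          exact (mem_sdiff.mp hj).1
        · rw [if_neg h] at hj
          exact hBsub j hj
      · intro y hy
        by_cases h : y ∈ U
        · obtain ⟨j, hj, hjy⟩ := mem_biUnion.mp h
          refine mem_biUnion.mpr ⟨j, mem_univ j, ?_⟩
          simp only [hQdef, if_neg (mem_erase.mp hj).1]
          exact hjy
        · refine mem_biUnion.mpr ⟨j0, mem_univ j0, ?_⟩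
          simp only [hQdef, if_pos]
          exact mem_sdiff.mpr ⟨hy, h⟩
    have hQsub : ∀ j, Q j ⊆ M' := by
      intro j y hy
      rw [← hQunion]
      exact mem_biUnion.mpr ⟨j, mem_univ j, hy⟩
    have hBQ : ∀ j, ∑ i ∈ B j, v i ≤ ∑ i ∈ Q j, v i := by
      intro j
      by_cases h : j = j0
      · simp only [hQdef, if_pos h]
        apply Finset.sum_le_sum_of_subset_of_nonneg
        · intro y hy
          refine mem_sdiff.mpr ⟨hBsub j hy, fun hc => ?_⟩
          obtain ⟨l, hl, hly⟩ := mem_biUnion.mp hc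
          have hlj : l ≠ j := by
            intro hlj; subst hlj; exact (mem_erase.mp hl).1 h
          exact Finset.disjoint_left.mp (hBdisj j l (fun hc' => hlj hc'.symm)) hy hly
        · intro i hi _
          exact hM'nn i ((mem_sdiff.mp hi).1)
      · simp only [hQdef, if_neg h]
        exact le_rfl
    refine le_trans ?_ (le_csSup hbdd ⟨Q, ⟨hQdisj, hQunion⟩, rfl⟩)
    apply le_ciInf
    intro j
    refine le_trans (ciInf_le (Set.Finite.bddBelow (Set.finite_range _)) (e j)) ?_
    exact le_trans (hBsum j) (hBQ j)
  · -- 0 ≤ mms of the reduced instance, witnessed by the trivial partition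
    set R : Fin (n - 1) → Finset ℕ := fun j => if j = j0 then M' else ∅ with hRdef
    have hRpart : IsPartition (n - 1) M' R := by
      constructor
      · intro k l hkl
        rw [hRdef]
        by_cases hk : k = j0 <;> by_cases hl : l = j0 <;>
          simp_all [Finset.disjoint_empty_right, Finset.disjoint_empty_left]
      · apply Finset.Subset.antisymm
        · intro y hy
          obtain ⟨j, -, hj⟩ := mem_biUnion.mp hy
          simp only [hRdef] at hj
          by_cases h : j = j0
          · rwa [if_pos h] at hj
          · rw [if_neg h] at hj; exact absurd hj (Finset.notMem_empty y)
        · intro y hy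
          exact mem_biUnion.mpr ⟨j0, mem_univ j0, by simp only [hRdef, if_pos]; exact hy⟩
    have h0 : (0 : ℝ) ≤ ⨅ k : Fin (n - 1), ∑ j ∈ R k, v j := by
      apply le_ciInf
      intro k
      by_cases h : k = j0
      · simp only [hRdef, if_pos h]
        exact Finset.sum_nonneg hM'nn
      · simp only [hRdef, if_neg h, Finset.sum_empty]
        exact le_rfl
    exact le_trans h0 (le_csSup hbdd ⟨R, hRpart, rfl⟩)
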